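/- Let $0 < \lambda_1 \leq \Lambda_0(y) \leq \lambda_2$ and let $Q_0$ be a nonnegative solution of $\partial_y((v\cdot G - y)Q_0) = \Lambda_0(y)(\langle Q_0\rangle - Q_0)$ on the region $\{y < v\cdot G\}$ vanishing at $y = -|G|$. Then for $y < v\cdot G$ the two-sided Duhamel bounds hold: $(v\cdot G - y)^{1-\lambda_2} Q_0(y,v) \geq \lambda_1 \int_{-|G|}^{y} (v\cdot G - z)^{-\lambda_2}\langle Q_0\rangle(z)\,dz$ and $(v\cdot G - y)^{1-\lambda_1} Q_0(y,v) \leq \lambda_2 \int_{-|G|}^{y} (v\cdot G - z)^{-\lambda_1}\langle Q_0\rangle(z)\,dz$. -/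

import Mathlib

open MeasureTheory Set

noncomputable section

/-- two-sided Duhamel bounds for `Q0` on the region `y < v⋅G`. -/
theorem duhamel_bounds {d : ℕ} (G : EuclideanSpace ℝ (Fin d))
    (V : Set (EuclideanSpace ℝ (Fin d)))
    (Λ0 : ℝ → ℝ) (lam1 lam2 : ℝ) (hlam1 : 0 < lam1)
    (hΛcont : Continuous Λ0) (hΛbd : ∀ y, lam1 ≤ Λ0 y ∧ Λ0 y ≤ lam2)
    (Q0 : ℝ → EuclideanSpace ℝ (Fin d) → ℝ)
    (hpos : ∀ y v, 0 ≤ Q0 y v)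
    (heq : ∀ y, ∀ v ∈ V,
      HasDerivAt (fun y' => ((inner ℝ v G : ℝ) - y') * Q0 y' v)
        (Λ0 y * (((volume V).toReal)⁻¹ * (∫ w in V, Q0 y w) - Q0 y v)) y)
    (hbdry : ∀ v, Q0 (-‖G‖) v = 0) :
    ∀ v ∈ V, ∀ y : ℝ, -‖G‖ ≤ y → y < (inner ℝ v G : ℝ) →
      (lam1 * ∫ z in Ioc (-‖G‖) y,
          ((inner ℝ v G : ℝ) - z) ^ (-lam2) * (((volume V).toReal)⁻¹ * ∫ w in V, Q0 z w)
        ≤ ((inner ℝ v G : ℝ) - y) ^ (1 - lam2) * Q0 y v)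
      ∧ ((inner ℝ v G : ℝ) - y) ^ (1 - lam1) * Q0 y v
        ≤ lam2 * ∫ z in Ioc (-‖G‖) y,
            ((inner ℝ v G : ℝ) - z) ^ (-lam1) * (((volume V).toReal)⁻¹ * ∫ w in V, Q0 z w) := by
  intro v hv y hay hyc
  set c : ℝ := (inner ℝ v G : ℝ) with hcdef
  set a : ℝ := -‖G‖ with hadef
  set avg : ℝ → ℝ := fun z => ((volume V).toReal)⁻¹ * ∫ w in V, Q0 z w with havgdef
  set F : ℝ → ℝ := fun z => (c - z) * Q0 z v with hFdef
  have hF : ∀ z, HasDerivAt F (Λ0 z * (avg z - Q0 z v)) z := fun z => heq z v hv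
  have hFc : Continuous F := continuous_iff_continuousAt.2 fun z => (hF z).continuousAt
  have hca : ∀ z ∈ Icc a y, 0 < c - z := fun z hz => sub_pos.2 (lt_of_le_of_lt hz.2 hyc)
  have havg0 : ∀ z, 0 ≤ avg z := fun z =>
    mul_nonneg (inv_nonneg.2 ENNReal.toReal_nonneg) (integral_nonneg fun w => hpos z w)
  -- measurable version of Q0 · v
  set Qv : ℝ → ℝ := fun z => F z / (c - z) with hQvdef
  have hQv : ∀ z ∈ Icc a y, Qv z = Q0 z v := fun z hz => by
    simp only [hQvdef, hFdef]
    exact mul_div_cancel_left₀ _ (hca z hz).ne'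
  have hQvc : ContinuousOn Qv (Icc a y) :=
    hFc.continuousOn.div (continuous_const.sub continuous_id).continuousOn
      fun z hz => (hca z hz).ne'
  -- a bound on Q0 · v over [a,y]
  obtain ⟨z0, hz0, hz0max⟩ := isCompact_Icc.exists_isMaxOn (nonempty_Icc.2 hay) hQvc
  set M : ℝ := Qv z0 with hMdef
  have hM : ∀ z ∈ Icc a y, Q0 z v ≤ M := fun z hz => (hQv z hz) ▸ hz0max hz
  have hM0 : 0 ≤ M := (hpos a v).trans (hM a (left_mem_Icc.2 hay))
  -- W = F + lam2 * M * id is monotone on [a,y]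
  set W : ℝ → ℝ := fun z => F z + lam2 * M * z with hWdef
  have hW : ∀ z, HasDerivAt W (Λ0 z * (avg z - Q0 z v) + lam2 * M) z := fun z => by
    have h2 : HasDerivAt (fun t : ℝ => lam2 * M * t) (lam2 * M) z := by
      simpa using (hasDerivAt_id z).const_mul (lam2 * M)
    exact (hF z).add h2
  have hl2 : 0 < lam2 := hlam1.trans_le ((hΛbd 0).1.trans (hΛbd 0).2)
  have hW0 : ∀ z ∈ Icc a y, 0 ≤ Λ0 z * (avg z - Q0 z v) + lam2 * M := fun z hz => by
    have h1 := (hΛbd z).1; have h2 := (hΛbd z).2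
    have h3 := hpos z v; have h4 := havg0 z; have h5 := hM z hz
    nlinarith [mul_nonneg (hlam1.le.trans h1) h4, mul_le_mul h2 h5 h3 hl2.le]
  have hWmono : MonotoneOn W (Icc a y) := by
    apply monotoneOn_of_hasDerivWithinAt_nonneg (convex_Icc a y)
      (Continuous.continuousOn (by fun_prop))
      (f' := fun z => Λ0 z * (avg z - Q0 z v) + lam2 * M)
    · intro x hx
      exact (hW x).hasDerivWithinAt
    · intro x hx
      rw [interior_Icc] at hx
      exact hW0 x (Ioo_subset_Icc_self hx)
  -- clamp W to get a globally monotone function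
  set Wt : ℝ → ℝ := fun z => W (min (max z a) y) with hWtdef
  have hmemIcc : ∀ z : ℝ, min (max z a) y ∈ Icc a y := fun z =>
    ⟨le_min (le_max_right _ _) hay, min_le_right _ _⟩
  have hWtm : Monotone Wt := fun z1 z2 h =>
    hWmono (hmemIcc z1) (hmemIcc z2) (min_le_min (max_le_max h le_rfl) le_rfl)
  have hWt_eq : ∀ z ∈ Icc a y, Wt z = W z := fun z hz => by
    simp only [hWtdef, max_eq_left hz.1, min_eq_left hz.2]
  set μ : Measure ℝ := hWtm.stieltjesFunction.measure with hμdef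
  have hae := hWtm.ae_hasDerivAt
  have key : ∀ᵐ x ∂(volume.restrict (Ioo a y)),
      Λ0 x * (avg x - Q0 x v) + lam2 * M = (μ.rnDeriv volume x).toReal := by
    filter_upwards [ae_restrict_of_ae hae, ae_restrict_mem measurableSet_Ioo] with x hx hmem
    have heq' : W =ᶠ[nhds x] Wt := by
      filter_upwards [isOpen_Ioo.mem_nhds hmem] with t ht
      exact (hWt_eq t (Ioo_subset_Icc_self ht)).symm
    exact (hW x).unique (hx.congr_of_eventuallyEq heq')
  have IntW' : IntegrableOn (fun z => Λ0 z * (avg z - Q0 z v) + lam2 * M) (Ioo a y) := by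
    constructor
    · have hfn : (fun z => Λ0 z * (avg z - Q0 z v) + lam2 * M)
          = fun z => deriv F z + lam2 * M := funext fun z => by rw [(hF z).deriv]
      rw [hfn]
      exact ((measurable_deriv F).add_const _).aestronglyMeasurable
    · rw [hasFiniteIntegral_iff_norm]
      calc ∫⁻ x in Ioo a y, ENNReal.ofReal ‖Λ0 x * (avg x - Q0 x v) + lam2 * M‖
          = ∫⁻ x in Ioo a y, ENNReal.ofReal ((μ.rnDeriv volume x).toReal) := by
            apply lintegral_congr_ae
            filter_upwards [key, ae_restrict_mem measurableSet_Ioo] with x h1 h2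
            rw [Real.norm_of_nonneg (hW0 x (Ioo_subset_Icc_self h2)), h1]
        _ ≤ ∫⁻ x in Ioo a y, μ.rnDeriv volume x := lintegral_mono fun x => ENNReal.ofReal_toReal_le
        _ ≤ μ (Ioo a y) := Measure.setLIntegral_rnDeriv_le _
        _ ≤ μ (Ioc a y) := measure_mono Ioo_subset_Ioc_self
        _ < ⊤ := by
            rw [hμdef, StieltjesFunction.measure_Ioc]
            exact ENNReal.ofReal_lt_top
  have IntF'Ioo : IntegrableOn (fun z => Λ0 z * (avg z - Q0 z v)) (Ioo a y) := by
    have hconst : IntegrableOn (fun _ : ℝ => lam2 * M) (Ioo a y) :=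
      integrableOn_const measure_Ioo_lt_top.ne
    exact (IntW'.sub hconst).congr (ae_of_all _ fun z => by simp)
  have IntF' : IntegrableOn (fun z => Λ0 z * (avg z - Q0 z v)) (Icc a y) := by
    rwa [IntegrableOn, Measure.restrict_congr_set Ioo_ae_eq_Icc] at IntF'Ioo
  -- integrability of avg on [a,y]
  have Iavg : IntegrableOn avg (Icc a y) := by
    have hΛinv : Continuous fun z => (Λ0 z)⁻¹ :=
      hΛcont.inv₀ fun z => (hlam1.trans_le (hΛbd z).1).ne'
    have h1 : IntegrableOn (fun z => (Λ0 z)⁻¹ * (Λ0 z * (avg z - Q0 z v))) (Icc a y) := by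
      apply Integrable.bdd_mul IntF' (hΛinv.aestronglyMeasurable) (c := lam1⁻¹)
      apply ae_of_all
      intro x
      have hpos' : 0 < Λ0 x := hlam1.trans_le (hΛbd x).1
      rw [Real.norm_of_nonneg (inv_nonneg.2 hpos'.le)]
      exact inv_anti₀ hlam1 (hΛbd x).1
    have h2 : IntegrableOn Qv (Icc a y) := hQvc.integrableOn_Icc
    have h12 : IntegrableOn (fun z => (Λ0 z)⁻¹ * (Λ0 z * (avg z - Q0 z v)) + Qv z) (Icc a y) :=
      h1.add h2
    apply h12.congr_fun _ measurableSet_Icc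
    intro z hz
    have hΛne : Λ0 z ≠ 0 := (hlam1.trans_le (hΛbd z).1).ne'
    show (Λ0 z)⁻¹ * (Λ0 z * (avg z - Q0 z v)) + Qv z = avg z
    rw [hQv z hz, inv_mul_cancel_left₀ hΛne]
    ring
  -- integrability of the weighted averages
  have Iint : ∀ lam : ℝ, IntegrableOn (fun z => (c - z) ^ (-lam) * avg z) (Icc a y) := by
    intro lam
    have hrc : ContinuousOn (fun z => (c - z) ^ (-lam)) (Icc a y) := fun z hz =>
      ((Real.continuousAt_rpow_const _ _ (Or.inl (hca z hz).ne')).comp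
        ((continuous_const.sub continuous_id).continuousAt)).continuousWithinAt
    obtain ⟨z1, hz1, hz1max⟩ := isCompact_Icc.exists_isMaxOn (nonempty_Icc.2 hay) hrc.norm
    apply Integrable.bdd_mul Iavg (hrc.aestronglyMeasurable measurableSet_Icc)
      (c := ‖(c - z1) ^ (-lam)‖)
    filter_upwards [ae_restrict_mem measurableSet_Icc] with x hx
    exact hz1max hx
  -- derivative of (c - z)^(-lam) * F z
  have hphi : ∀ (lam : ℝ), ∀ x ∈ Icc a y, HasDerivAt (fun z => (c - z) ^ (-lam) * F z)
      ((c - x) ^ (-lam) * (Λ0 x * avg x + (lam - Λ0 x) * Q0 x v)) x := by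
    intro lam x hx
    have hx0 : (0:ℝ) < c - x := hca x hx
    have h1 : HasDerivAt (fun z => (c - z) ^ (-lam)) (lam * (c - x) ^ (-lam - 1)) x := by
      have := (HasDerivAt.const_sub c (hasDerivAt_id x)).rpow_const (p := -lam) (Or.inl hx0.ne')
      convert this using 1
      show lam * (c - x) ^ (-lam - 1) = -1 * -lam * (c - x) ^ (-lam - 1)
      ring
      rfl
    have h2 : HasDerivAt (fun z => (c - z) ^ (-lam) * F z) _ x := h1.mul (hF x)
    convert h2 using 1
    have h3 : (c - x) ^ (-lam) = (c - x) ^ (-lam - 1) * (c - x) := by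
      have h4 := Real.rpow_add_one hx0.ne' (-lam - 1)
      simpa using h4
    simp only [hFdef]
    rw [h3]
    ring
  have hphicont : ∀ lam : ℝ, ContinuousOn (fun z => (c - z) ^ (-lam) * F z) (Icc a y) :=
    fun lam x hx => ((hphi lam x hx).continuousAt).continuousWithinAt
  have hphia : ∀ lam : ℝ, (c - a) ^ (-lam) * F a = 0 := fun lam => by
    simp only [hFdef, hbdry v, mul_zero]
  have hphiy : ∀ lam : ℝ, (c - y) ^ (-lam) * F y = (c - y) ^ (1 - lam) * Q0 y v := fun lam => by
    rw [show (1:ℝ) - lam = 1 + -lam by ring, Real.rpow_add (sub_pos.2 hyc), Real.rpow_one]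
    simp only [hFdef]
    ring
  constructor
  · -- lower bound, exponent lam2
    have hlow := intervalIntegral.integral_le_sub_of_hasDeriv_right_of_le (g := fun z => (c - z) ^ (-lam2) * F z)
      (g' := fun x => (c - x) ^ (-lam2) * (Λ0 x * avg x + (lam2 - Λ0 x) * Q0 x v))
      (φ := fun z => lam1 * ((c - z) ^ (-lam2) * avg z)) hay (hphicont lam2)
      (fun x hx => (hphi lam2 x (Ioo_subset_Icc_self hx)).hasDerivWithinAt)
      ((Iint lam2).const_mul lam1) ?_
    · rw [intervalIntegral.integral_of_le hay, hphia lam2, hphiy lam2, sub_zero,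
        integral_const_mul] at hlow
      exact hlow
    · intro x hx
      have hp : 0 < (c - x) ^ (-lam2) := Real.rpow_pos_of_pos (hca x (Ioo_subset_Icc_self hx)) _
      have h1 : lam1 * avg x ≤ Λ0 x * avg x + (lam2 - Λ0 x) * Q0 x v := by
        nlinarith [mul_le_mul_of_nonneg_right (hΛbd x).1 (havg0 x),
          mul_nonneg (sub_nonneg.2 (hΛbd x).2) (hpos x v)]
      calc lam1 * ((c - x) ^ (-lam2) * avg x) = (c - x) ^ (-lam2) * (lam1 * avg x) := by ring
        _ ≤ (c - x) ^ (-lam2) * (Λ0 x * avg x + (lam2 - Λ0 x) * Q0 x v) :=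
          mul_le_mul_of_nonneg_left h1 hp.le
  · -- upper bound, exponent lam1
    have hup := intervalIntegral.sub_le_integral_of_hasDeriv_right_of_le (g := fun z => (c - z) ^ (-lam1) * F z)
      (g' := fun x => (c - x) ^ (-lam1) * (Λ0 x * avg x + (lam1 - Λ0 x) * Q0 x v))
      (φ := fun z => lam2 * ((c - z) ^ (-lam1) * avg z)) hay (hphicont lam1)
      (fun x hx => (hphi lam1 x (Ioo_subset_Icc_self hx)).hasDerivWithinAt)
      ((Iint lam1).const_mul lam2) ?_
    · rw [intervalIntegral.integral_of_le hay, hphia lam1, hphiy lam1, sub_zero,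
        integral_const_mul] at hup
      exact hup
    · intro x hx
      have hp : 0 < (c - x) ^ (-lam1) := Real.rpow_pos_of_pos (hca x (Ioo_subset_Icc_self hx)) _
      have h1 : Λ0 x * avg x + (lam1 - Λ0 x) * Q0 x v ≤ lam2 * avg x := by
        nlinarith [mul_le_mul_of_nonneg_right (hΛbd x).2 (havg0 x),
          mul_nonneg (sub_nonneg.2 (hΛbd x).1) (hpos x v)]
      calc (c - x) ^ (-lam1) * (Λ0 x * avg x + (lam1 - Λ0 x) * Q0 x v)
          ≤ (c - x) ^ (-lam1) * (lam2 * avg x) := mul_le_mul_of_nonneg_left h1 hp.le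
        _ = lam2 * ((c - x) ^ (-lam1) * avg x) := by ring
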